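/- arXiv:2602.19860 — 2 statements merged into one kernel-verified Lean document; each statement's English description precedes it below -/
import Mathlib

section
/- Given an adjunction F ⊣ U between monoidal categories, there is a bijection between oplax monoidal structures on F and lax monoidal structures on U. In particular, given an oplax monoidal structure (F₂, F₀) on F, the corresponding lax structure on U is U₂ : Ux ⊗ Uy → UF(Ux ⊗ Uy) → U(FUx ⊗ FUy) → U(x ⊗ y), using the unit of the adjunction, F₂, and the counits ε_x ⊗ ε_y. -/
open CategoryTheory MonoidalCategory

universe v₁ v₂ u₁ u₂

variable {C : Type u₁} [Category.{v₁} C] [MonoidalCategory C]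
variable {D : Type u₂} [Category.{v₂} D] [MonoidalCategory D]

/-- An oplax monoidal structure on a functor `F` between monoidal categories. -/
structure OplaxMonoidalStruct (F : C ⥤ D) where
  δ : ∀ X Y : C, F.obj (X ⊗ Y) ⟶ F.obj X ⊗ F.obj Y
  ε : F.obj (𝟙_ C) ⟶ 𝟙_ D
  δ_natural : ∀ {X X' Y Y' : C} (f : X ⟶ X') (g : Y ⟶ Y'),
    F.map (f ⊗ₘ g) ≫ δ X' Y' = δ X Y ≫ (F.map f ⊗ₘ F.map g)
  coassoc : ∀ X Y Z : C,
    δ (X ⊗ Y) Z ≫ (δ X Y ⊗ₘ 𝟙 (F.obj Z)) ≫ (α_ (F.obj X) (F.obj Y) (F.obj Z)).hom =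
      F.map (α_ X Y Z).hom ≫ δ X (Y ⊗ Z) ≫ (𝟙 (F.obj X) ⊗ₘ δ Y Z)
  left_counit : ∀ X : C,
    δ (𝟙_ C) X ≫ (ε ⊗ₘ 𝟙 (F.obj X)) ≫ (λ_ (F.obj X)).hom = F.map (λ_ X).hom
  right_counit : ∀ X : C,
    δ X (𝟙_ C) ≫ (𝟙 (F.obj X) ⊗ₘ ε) ≫ (ρ_ (F.obj X)).hom = F.map (ρ_ X).hom

/-- A lax monoidal structure on a functor `U` between monoidal categories. -/
structure LaxMonoidalStruct (U : D ⥤ C) where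
  μ : ∀ X Y : D, U.obj X ⊗ U.obj Y ⟶ U.obj (X ⊗ Y)
  η : 𝟙_ C ⟶ U.obj (𝟙_ D)
  μ_natural : ∀ {X X' Y Y' : D} (f : X ⟶ X') (g : Y ⟶ Y'),
    (U.map f ⊗ₘ U.map g) ≫ μ X' Y' = μ X Y ≫ U.map (f ⊗ₘ g)
  assoc : ∀ X Y Z : D,
    (μ X Y ⊗ₘ 𝟙 (U.obj Z)) ≫ μ (X ⊗ Y) Z ≫ U.map (α_ X Y Z).hom =
      (α_ (U.obj X) (U.obj Y) (U.obj Z)).hom ≫ (𝟙 (U.obj X) ⊗ₘ μ Y Z) ≫ μ X (Y ⊗ Z)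
  left_unit : ∀ X : D,
    (η ⊗ₘ 𝟙 (U.obj X)) ≫ μ (𝟙_ D) X ≫ U.map (λ_ X).hom = (λ_ (U.obj X)).hom
  right_unit : ∀ X : D,
    (𝟙 (U.obj X) ⊗ₘ η) ≫ μ X (𝟙_ D) ≫ U.map (ρ_ X).hom = (ρ_ (U.obj X)).hom

namespace DoctrinalAux

variable {F : C ⥤ D} {U : D ⥤ C}

omit [MonoidalCategory C] [MonoidalCategory D] in
lemma mateF (adj : F ⊣ U) {A : C} {B : D} (k : F.obj A ⟶ B) :
    F.map (adj.unit.app A ≫ U.map k) ≫ adj.counit.app B = k := by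
  simp

omit [MonoidalCategory C] [MonoidalCategory D] in
lemma mateU (adj : F ⊣ U) {A : C} {B : D} (h : A ⟶ U.obj B) :
    adj.unit.app A ≫ U.map (F.map h ≫ adj.counit.app B) = h := by
  simp

omit [MonoidalCategory C] [MonoidalCategory D] in
lemma mateU' (adj : F ⊣ U) {A : C} {B B' : D} (h : A ⟶ U.obj B) (g : B ⟶ B') :
    adj.unit.app A ≫ U.map (F.map h ≫ adj.counit.app B ≫ g) = h ≫ U.map g := by
  rw [show F.map h ≫ adj.counit.app B ≫ g = (F.map h ≫ adj.counit.app B) ≫ g by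
      rw [Category.assoc], U.map_comp, ← Category.assoc, mateU adj h]

omit [MonoidalCategory C] [MonoidalCategory D] in
lemma pull (adj : F ⊣ U) {A A' : C} (f : A ⟶ A') {B : D} (k : F.obj A' ⟶ B) :
    f ≫ adj.unit.app A' ≫ U.map k = adj.unit.app A ≫ U.map (F.map f ≫ k) := by
  rw [U.map_comp, ← Category.assoc, ← adj.unit_naturality f, Category.assoc]

omit [MonoidalCategory C] [MonoidalCategory D] in
lemma hom_ext (adj : F ⊣ U) {A : C} {B : D} {f g : F.obj A ⟶ B}
    (h : adj.unit.app A ≫ U.map f = adj.unit.app A ≫ U.map g) : f = g := by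
  apply (adj.homEquiv A B).injective
  simpa [Adjunction.homEquiv_unit] using h


lemma tcomp {E : Type*} [Category E] [MonoidalCategory E]
    {a b c a' b' c' : E} (f₁ : a ⟶ b) (g₁ : b ⟶ c) (f₂ : a' ⟶ b') (g₂ : b' ⟶ c')
    {Z : E} (h : c ⊗ c' ⟶ Z) :
    (f₁ ⊗ₘ f₂) ≫ (g₁ ⊗ₘ g₂) ≫ h = ((f₁ ≫ g₁) ⊗ₘ (f₂ ≫ g₂)) ≫ h := by
  rw [← Category.assoc, tensorHom_comp_tensorHom]

lemma tcomp2 {E : Type*} [Category E] [MonoidalCategory E]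
    {a b c a' b' c' : E} (f₁ : a ⟶ b) (g₁ : b ⟶ c) (f₂ : a' ⟶ b') (g₂ : b' ⟶ c') :
    (f₁ ⊗ₘ f₂) ≫ (g₁ ⊗ₘ g₂) = (f₁ ≫ g₁) ⊗ₘ (f₂ ≫ g₂) := by
  rw [tensorHom_comp_tensorHom]

section ToLax

variable (adj : F ⊣ U) (o : OplaxMonoidalStruct F)

/-- The composite `F(Ux ⊗ Uy) ⟶ FUx ⊗ FUy ⟶ x ⊗ y`. -/
def dd (x y : D) : F.obj (U.obj x ⊗ U.obj y) ⟶ x ⊗ y :=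
  o.δ (U.obj x) (U.obj y) ≫ (adj.counit.app x ⊗ₘ adj.counit.app y)

/-- The lax multiplication on `U`. -/
def mu (x y : D) : U.obj x ⊗ U.obj y ⟶ U.obj (x ⊗ y) :=
  adj.unit.app (U.obj x ⊗ U.obj y) ≫ U.map (dd adj o x y)

lemma Fmu_counit' (x y : D) :
    F.map (mu adj o x y) ≫ adj.counit.app (x ⊗ y) =
      o.δ (U.obj x) (U.obj y) ≫ (adj.counit.app x ⊗ₘ adj.counit.app y) :=
  mateF adj _

lemma mu_natural {x x' y y' : D} (f : x ⟶ x') (g : y ⟶ y') :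
    (U.map f ⊗ₘ U.map g) ≫ mu adj o x' y' = mu adj o x y ≫ U.map (f ⊗ₘ g) := by
  unfold mu
  rw [pull adj]
  conv_rhs => rw [Category.assoc, ← U.map_comp]
  congr 1
  unfold dd
  try simp only [CategoryTheory.Functor.comp_obj, CategoryTheory.Functor.id_obj]
  try simp only [Category.assoc]
  rw [reassoc_of% o.δ_natural (U.map f) (U.map g)]
  rw [tcomp2, adj.counit_naturality f, adj.counit_naturality g, ← tensorHom_comp_tensorHom]
  try simp only [Category.assoc]

lemma mu_assoc (x y z : D) :
    (mu adj o x y ⊗ₘ 𝟙 (U.obj z)) ≫ mu adj o (x ⊗ y) z ≫ U.map (α_ x y z).hom =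
      (α_ (U.obj x) (U.obj y) (U.obj z)).hom ≫ (𝟙 (U.obj x) ⊗ₘ mu adj o y z) ≫
        mu adj o x (y ⊗ z) := by
  conv_lhs => rw [show mu adj o (x ⊗ y) z
      = adj.unit.app (U.obj (x ⊗ y) ⊗ U.obj z) ≫ U.map (dd adj o (x ⊗ y) z) from rfl,
    Category.assoc, ← U.map_comp, pull adj]
  conv_rhs => rw [show mu adj o x (y ⊗ z)
      = adj.unit.app (U.obj x ⊗ U.obj (y ⊗ z)) ≫ U.map (dd adj o x (y ⊗ z)) from rfl,
    pull adj, pull adj]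
  congr 1
  unfold dd
  try simp only [CategoryTheory.Functor.comp_obj, CategoryTheory.Functor.id_obj]
  try simp only [Category.assoc]
  rw [reassoc_of% o.δ_natural (mu adj o x y) (𝟙 (U.obj z))]
  try simp only [CategoryTheory.Functor.map_id]
  rw [tcomp, Fmu_counit' adj o x y, Category.id_comp]
  rw [show (o.δ (U.obj x) (U.obj y) ≫ (adj.counit.app x ⊗ₘ adj.counit.app y)) ⊗ₘ
        adj.counit.app z
      = (o.δ (U.obj x) (U.obj y) ⊗ₘ 𝟙 (F.obj (U.obj z))) ≫
        ((adj.counit.app x ⊗ₘ adj.counit.app y) ⊗ₘ adj.counit.app z) by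
    rw [tensorHom_comp_tensorHom]; simp]
  try simp only [Category.assoc]
  simp only [CategoryTheory.Functor.comp_obj, CategoryTheory.Functor.id_obj]
  rw [associator_naturality]
  rw [reassoc_of% o.coassoc (U.obj x) (U.obj y) (U.obj z)]
  rw [reassoc_of% o.δ_natural (𝟙 (U.obj x)) (mu adj o y z)]
  try simp only [CategoryTheory.Functor.map_id]
  rw [tcomp2]
  conv_rhs => rw [tcomp2, Fmu_counit' adj o y z]

lemma mu_left_unit (x : D) :
    ((adj.unit.app (𝟙_ C) ≫ U.map o.ε) ⊗ₘ 𝟙 (U.obj x)) ≫ mu adj o (𝟙_ D) x ≫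
      U.map (λ_ x).hom = (λ_ (U.obj x)).hom := by
  have inner : F.map ((adj.unit.app (𝟙_ C) ≫ U.map o.ε) ⊗ₘ 𝟙 (U.obj x)) ≫
      dd adj o (𝟙_ D) x ≫ (λ_ x).hom = F.map (λ_ (U.obj x)).hom ≫ adj.counit.app x := by
    unfold dd
    try simp only [CategoryTheory.Functor.comp_obj, CategoryTheory.Functor.id_obj]
    try simp only [Category.assoc]
    rw [reassoc_of% o.δ_natural (adj.unit.app (𝟙_ C) ≫ U.map o.ε) (𝟙 (U.obj x))]
    try simp only [CategoryTheory.Functor.map_id]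
    rw [tcomp, mateF adj o.ε, Category.id_comp]
    rw [show o.ε ⊗ₘ adj.counit.app x
        = (o.ε ⊗ₘ 𝟙 (F.obj (U.obj x))) ≫ (𝟙 (𝟙_ D) ⊗ₘ adj.counit.app x) by
      rw [tensorHom_comp_tensorHom]; simp]
    try simp only [Category.assoc]
    rw [id_tensorHom, leftUnitor_naturality]
    rw [reassoc_of% o.left_counit (U.obj x)]
  conv_lhs => rw [show mu adj o (𝟙_ D) x
      = adj.unit.app (U.obj (𝟙_ D) ⊗ U.obj x) ≫ U.map (dd adj o (𝟙_ D) x) from rfl,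
    Category.assoc, ← U.map_comp, pull adj]
  rw [inner]
  exact mateU adj (λ_ (U.obj x)).hom

lemma mu_right_unit (x : D) :
    (𝟙 (U.obj x) ⊗ₘ (adj.unit.app (𝟙_ C) ≫ U.map o.ε)) ≫ mu adj o x (𝟙_ D) ≫
      U.map (ρ_ x).hom = (ρ_ (U.obj x)).hom := by
  have inner : F.map (𝟙 (U.obj x) ⊗ₘ (adj.unit.app (𝟙_ C) ≫ U.map o.ε)) ≫
      dd adj o x (𝟙_ D) ≫ (ρ_ x).hom = F.map (ρ_ (U.obj x)).hom ≫ adj.counit.app x := by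
    unfold dd
    try simp only [CategoryTheory.Functor.comp_obj, CategoryTheory.Functor.id_obj]
    try simp only [Category.assoc]
    rw [reassoc_of% o.δ_natural (𝟙 (U.obj x)) (adj.unit.app (𝟙_ C) ≫ U.map o.ε)]
    try simp only [CategoryTheory.Functor.map_id]
    rw [tcomp, mateF adj o.ε, Category.id_comp]
    rw [show adj.counit.app x ⊗ₘ o.ε
        = (𝟙 (F.obj (U.obj x)) ⊗ₘ o.ε) ≫ (adj.counit.app x ⊗ₘ 𝟙 (𝟙_ D)) by
      rw [tensorHom_comp_tensorHom]; simp]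
    try simp only [Category.assoc]
    rw [tensorHom_id, rightUnitor_naturality]
    rw [reassoc_of% o.right_counit (U.obj x)]
  conv_lhs => rw [show mu adj o x (𝟙_ D)
      = adj.unit.app (U.obj x ⊗ U.obj (𝟙_ D)) ≫ U.map (dd adj o x (𝟙_ D)) from rfl,
    Category.assoc, ← U.map_comp, pull adj]
  rw [inner]
  exact mateU adj (ρ_ (U.obj x)).hom

/-- The lax monoidal structure on `U` obtained from an oplax structure on `F`. -/
def toLax : LaxMonoidalStruct U where
  μ := mu adj o
  η := adj.unit.app (𝟙_ C) ≫ U.map o.ε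
  μ_natural := mu_natural adj o
  assoc := mu_assoc adj o
  left_unit := mu_left_unit adj o
  right_unit := mu_right_unit adj o

end ToLax

section ToOplax

variable (adj : F ⊣ U) (l : LaxMonoidalStruct U)

/-- The composite `X ⊗ Y ⟶ UFX ⊗ UFY ⟶ U(FX ⊗ FY)`. -/
def hh (X Y : C) : X ⊗ Y ⟶ U.obj (F.obj X ⊗ F.obj Y) :=
  (adj.unit.app X ⊗ₘ adj.unit.app Y) ≫ l.μ (F.obj X) (F.obj Y)

/-- The oplax comultiplication on `F`. -/
def de (X Y : C) : F.obj (X ⊗ Y) ⟶ F.obj X ⊗ F.obj Y :=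
  F.map (hh adj l X Y) ≫ adj.counit.app (F.obj X ⊗ F.obj Y)

lemma de_bare (X Y : C) :
    adj.unit.app (X ⊗ Y) ≫ U.map (de adj l X Y) = hh adj l X Y := mateU adj _

lemma de_pull (X Y : C) {B' : D} (g : F.obj X ⊗ F.obj Y ⟶ B') :
    adj.unit.app (X ⊗ Y) ≫ U.map (de adj l X Y ≫ g) = hh adj l X Y ≫ U.map g := by
  unfold de
  rw [Category.assoc, mateU' adj]

lemma de_natural {X X' Y Y' : C} (f : X ⟶ X') (g : Y ⟶ Y') :
    F.map (f ⊗ₘ g) ≫ de adj l X' Y' = de adj l X Y ≫ (F.map f ⊗ₘ F.map g) := by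
  apply hom_ext adj
  rw [← pull adj, de_bare adj l, de_pull adj l]
  unfold hh
  try simp only [CategoryTheory.Functor.comp_obj, CategoryTheory.Functor.id_obj]
  try simp only [Category.assoc]
  rw [← l.μ_natural (F.map f) (F.map g)]
  rw [tcomp, ← adj.unit_naturality f, ← adj.unit_naturality g, tcomp]
  try simp only [Category.assoc]

lemma de_coassoc (X Y Z : C) :
    de adj l (X ⊗ Y) Z ≫ (de adj l X Y ⊗ₘ 𝟙 (F.obj Z)) ≫
      (α_ (F.obj X) (F.obj Y) (F.obj Z)).hom =
    F.map (α_ X Y Z).hom ≫ de adj l X (Y ⊗ Z) ≫ (𝟙 (F.obj X) ⊗ₘ de adj l Y Z) := by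
  apply hom_ext adj
  rw [de_pull adj l, ← pull adj, de_pull adj l]
  rw [U.map_comp]
  conv_lhs => rw [show hh adj l (X ⊗ Y) Z
      = (adj.unit.app (X ⊗ Y) ⊗ₘ adj.unit.app Z) ≫ l.μ (F.obj (X ⊗ Y)) (F.obj Z) from rfl]
  try simp only [Category.assoc]
  rw [← reassoc_of% l.μ_natural (de adj l X Y) (𝟙 (F.obj Z))]
  try simp only [CategoryTheory.Functor.map_id]
  rw [tcomp, de_bare adj l]
  simp only [CategoryTheory.Functor.comp_obj, CategoryTheory.Functor.id_obj, Category.comp_id, Category.id_comp]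
  rw [show hh adj l X Y ⊗ₘ adj.unit.app Z
      = ((adj.unit.app X ⊗ₘ adj.unit.app Y) ⊗ₘ adj.unit.app Z) ≫
        (l.μ (F.obj X) (F.obj Y) ⊗ₘ 𝟙 (U.obj (F.obj Z))) by
    unfold hh; rw [tensorHom_comp_tensorHom]; simp]
  try simp only [Category.assoc]
  rw [l.assoc]
  rw [reassoc_of% associator_naturality (adj.unit.app X) (adj.unit.app Y) (adj.unit.app Z)]
  conv_rhs => rw [show hh adj l X (Y ⊗ Z)
      = (adj.unit.app X ⊗ₘ adj.unit.app (Y ⊗ Z)) ≫ l.μ (F.obj X) (F.obj (Y ⊗ Z)) from rfl]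
  try simp only [Category.assoc]
  rw [← l.μ_natural (𝟙 (F.obj X)) (de adj l Y Z)]
  try simp only [CategoryTheory.Functor.map_id]
  rw [tcomp]
  conv_rhs => rw [tcomp, de_bare adj l,
    show hh adj l Y Z = (adj.unit.app Y ⊗ₘ adj.unit.app Z) ≫ l.μ (F.obj Y) (F.obj Z) from rfl]

lemma de_left_counit (X : C) :
    de adj l (𝟙_ C) X ≫ ((F.map l.η ≫ adj.counit.app (𝟙_ D)) ⊗ₘ 𝟙 (F.obj X)) ≫
      (λ_ (F.obj X)).hom = F.map (λ_ X).hom := by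
  apply hom_ext adj
  rw [de_pull adj l, U.map_comp]
  conv_lhs => rw [show hh adj l (𝟙_ C) X
      = (adj.unit.app (𝟙_ C) ⊗ₘ adj.unit.app X) ≫ l.μ (F.obj (𝟙_ C)) (F.obj X) from rfl]
  try simp only [Category.assoc]
  rw [← reassoc_of% l.μ_natural (F.map l.η ≫ adj.counit.app (𝟙_ D)) (𝟙 (F.obj X))]
  try simp only [CategoryTheory.Functor.map_id]
  rw [tcomp, mateU adj l.η]
  simp only [CategoryTheory.Functor.comp_obj, CategoryTheory.Functor.id_obj, Category.comp_id, Category.id_comp]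
  rw [show l.η ⊗ₘ adj.unit.app X
      = (𝟙 (𝟙_ C) ⊗ₘ adj.unit.app X) ≫ (l.η ⊗ₘ 𝟙 (U.obj (F.obj X))) by
    rw [tensorHom_comp_tensorHom]; simp]
  try simp only [Category.assoc]
  rw [l.left_unit]
  rw [id_tensorHom, leftUnitor_naturality]
  rw [adj.unit_naturality (λ_ X).hom]
  simp only [CategoryTheory.Functor.id_obj]

lemma de_right_counit (X : C) :
    de adj l X (𝟙_ C) ≫ (𝟙 (F.obj X) ⊗ₘ (F.map l.η ≫ adj.counit.app (𝟙_ D))) ≫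
      (ρ_ (F.obj X)).hom = F.map (ρ_ X).hom := by
  apply hom_ext adj
  rw [de_pull adj l, U.map_comp]
  conv_lhs => rw [show hh adj l X (𝟙_ C)
      = (adj.unit.app X ⊗ₘ adj.unit.app (𝟙_ C)) ≫ l.μ (F.obj X) (F.obj (𝟙_ C)) from rfl]
  try simp only [Category.assoc]
  rw [← reassoc_of% l.μ_natural (𝟙 (F.obj X)) (F.map l.η ≫ adj.counit.app (𝟙_ D))]
  try simp only [CategoryTheory.Functor.map_id]
  rw [tcomp, mateU adj l.η]
  simp only [CategoryTheory.Functor.comp_obj, CategoryTheory.Functor.id_obj, Category.comp_id, Category.id_comp]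
  rw [show adj.unit.app X ⊗ₘ l.η
      = (adj.unit.app X ⊗ₘ 𝟙 (𝟙_ C)) ≫ (𝟙 (U.obj (F.obj X)) ⊗ₘ l.η) by
    rw [tensorHom_comp_tensorHom]; simp]
  try simp only [Category.assoc]
  rw [l.right_unit]
  rw [tensorHom_id, rightUnitor_naturality]
  rw [adj.unit_naturality (ρ_ X).hom]
  simp only [CategoryTheory.Functor.id_obj]

/-- The oplax monoidal structure on `F` obtained from a lax structure on `U`. -/
def toOplax : OplaxMonoidalStruct F where
  δ := de adj l
  ε := F.map l.η ≫ adj.counit.app (𝟙_ D)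
  δ_natural := de_natural adj l
  coassoc := de_coassoc adj l
  left_counit := de_left_counit adj l
  right_counit := de_right_counit adj l

end ToOplax

lemma oplax_ext {F : C ⥤ D} {o o' : OplaxMonoidalStruct F}
    (h1 : o.δ = o'.δ) (h2 : o.ε = o'.ε) : o = o' := by
  cases o; cases o'
  dsimp at h1 h2
  subst h1; subst h2
  rfl

lemma lax_ext {U : D ⥤ C} {l l' : LaxMonoidalStruct U}
    (h1 : l.μ = l'.μ) (h2 : l.η = l'.η) : l = l' := by
  cases l; cases l'
  dsimp at h1 h2
  subst h1; subst h2
  rfl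

end DoctrinalAux

open DoctrinalAux in
/-- Doctrinal adjunction: given an adjunction `F ⊣ U` between monoidal categories,
oplax monoidal structures on `F` are in bijection with lax monoidal structures on `U`;
given an oplax structure `(F₂, F₀)` on `F`, the corresponding lax multiplication on `U` is
`Ux ⊗ Uy ⟶ UF(Ux ⊗ Uy) ⟶ U(FUx ⊗ FUy) ⟶ U(x ⊗ y)`, built from the unit of the
adjunction, `F₂`, and the counits `ε_x ⊗ ε_y`. -/
theorem oplax_structures_equiv_lax_structures
    (F : C ⥤ D) (U : D ⥤ C) (adj : F ⊣ U) :
    ∃ e : OplaxMonoidalStruct F ≃ LaxMonoidalStruct U,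
      ∀ (o : OplaxMonoidalStruct F) (x y : D),
        (e o).μ x y =
          adj.unit.app (U.obj x ⊗ U.obj y) ≫
            U.map (o.δ (U.obj x) (U.obj y)) ≫
            U.map (adj.counit.app x ⊗ₘ adj.counit.app y) := by
  refine ⟨⟨toLax adj, toOplax adj, ?_, ?_⟩, ?_⟩
  · intro o
    apply oplax_ext
    · funext X Y
      show F.map ((adj.unit.app X ⊗ₘ adj.unit.app Y) ≫ mu adj o (F.obj X) (F.obj Y)) ≫
        adj.counit.app (F.obj X ⊗ F.obj Y) = o.δ X Y
      rw [CategoryTheory.Functor.map_comp, Category.assoc, Fmu_counit' adj o]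
      have dn := o.δ_natural (adj.unit.app X) (adj.unit.app Y)
      simp only [CategoryTheory.Functor.comp_obj, CategoryTheory.Functor.id_obj] at dn
      rw [reassoc_of% dn]
      rw [tcomp2, adj.left_triangle_components, adj.left_triangle_components, id_tensorHom_id]
      simp
    · show F.map (adj.unit.app (𝟙_ C) ≫ U.map o.ε) ≫ adj.counit.app (𝟙_ D) = o.ε
      exact mateF adj o.ε
  · intro l
    apply lax_ext
    · funext x y
      show adj.unit.app (U.obj x ⊗ U.obj y) ≫
        U.map (de adj l (U.obj x) (U.obj y) ≫ (adj.counit.app x ⊗ₘ adj.counit.app y)) =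
        l.μ x y
      rw [de_pull adj l]
      unfold hh
      try simp only [CategoryTheory.Functor.comp_obj, CategoryTheory.Functor.id_obj]
      have mn := l.μ_natural (adj.counit.app x) (adj.counit.app y)
      simp only [CategoryTheory.Functor.comp_obj, CategoryTheory.Functor.id_obj] at mn
      rw [Category.assoc, ← mn, tcomp, adj.right_triangle_components,
        adj.right_triangle_components, id_tensorHom_id, Category.id_comp]
    · show adj.unit.app (𝟙_ C) ≫ U.map (F.map l.η ≫ adj.counit.app (𝟙_ D)) = l.η
      exact mateU adj l.η
  · intro o x y
    show mu adj o x y = _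
    unfold mu dd
    rw [U.map_comp]
end

section
/- Let T be a right exact monad on an abelian category A. Then the Eilenberg–Moore category Aᵀ is abelian, and for any projective object P ∈ A, the free module (TP, μ_P) is projective in Aᵀ. Moreover, if A has enough projectives then every projective object of Aᵀ is a direct summand of a free module TP with P projective in A. -/
open CategoryTheory CategoryTheory.Limits

universe v u

namespace MonadAbelianAux

variable {A : Type u} [Category.{v} A] [Abelian A]
variable (T : Monad A) [PreservesFiniteColimits (T : A ⥤ A)]

instance : (T : A ⥤ A).Additive := by
  have : HasBinaryBiproducts A := HasBinaryBiproducts.of_hasBinaryProducts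
  have := preservesBinaryBiproducts_of_preservesBinaryCoproducts (T : A ⥤ A)
  exact Functor.additive_of_preservesBinaryBiproducts _

instance : Preadditive T.Algebra where
  homGroup X Y :=
    { add := fun f g =>
        { f := f.f + g.f
          h := by
            rw [Functor.map_add, Preadditive.add_comp, Preadditive.comp_add, f.h, g.h] }
      zero :=
        { f := 0
          h := by rw [Functor.map_zero, zero_comp, comp_zero] }
      neg := fun f =>
        { f := -f.f
          h := by rw [Functor.map_neg, Preadditive.neg_comp, Preadditive.comp_neg, f.h] }
      sub := fun f g =>
        { f := f.f - g.f
          h := by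
            rw [Functor.map_sub, Preadditive.sub_comp, Preadditive.comp_sub, f.h, g.h] }
      add_assoc := fun f g h => Monad.Algebra.Hom.ext (add_assoc _ _ _)
      zero_add := fun f => Monad.Algebra.Hom.ext (zero_add _)
      add_zero := fun f => Monad.Algebra.Hom.ext (add_zero _)
      nsmul := nsmulRec
      zsmul := zsmulRec
      sub_eq_add_neg := fun f g => Monad.Algebra.Hom.ext (sub_eq_add_neg _ _)
      neg_add_cancel := fun f => Monad.Algebra.Hom.ext (neg_add_cancel _)
      add_comm := fun f g => Monad.Algebra.Hom.ext (add_comm _ _) }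
  add_comp _ _ _ f f' g := Monad.Algebra.Hom.ext (Preadditive.add_comp _ _ _ _ _ _)
  comp_add _ _ _ f g g' := Monad.Algebra.Hom.ext (Preadditive.comp_add _ _ _ _ _ _)

instance : HasFiniteLimits T.Algebra :=
  ⟨fun _ _ _ => hasLimitsOfShape_of_hasLimitsOfShape_createsLimitsOfShape (Monad.forget T)⟩

instance : HasFiniteColimits T.Algebra :=
  ⟨fun _ _ _ => hasColimitsOfShape_of_hasColimitsOfShape_createsColimitsOfShape (Monad.forget T)⟩

instance : PreservesFiniteLimits (Monad.forget T) :=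
  ⟨fun J _ _ => preservesLimitOfShape_of_createsLimitsOfShape_and_hasLimitsOfShape (Monad.forget T)⟩

instance : PreservesFiniteColimits (Monad.forget T) :=
  ⟨fun J _ _ => preservesColimitOfShape_of_createsColimitsOfShape_and_hasColimitsOfShape (Monad.forget T)⟩

/-- The forgetful functor commutes with the abelian coimage. -/
noncomputable def coimIso {X Y : T.Algebra} (f : X ⟶ Y) :
    (Monad.forget T).obj (Abelian.coimage f) ≅ Abelian.coimage ((Monad.forget T).map f) :=
  PreservesCokernel.iso (Monad.forget T) (kernel.ι f) ≪≫
    cokernelIsoOfEq (by rw [← kernelComparison_comp_ι]) ≪≫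
    cokernelEpiComp (kernelComparison f (Monad.forget T)) (kernel.ι ((Monad.forget T).map f))

lemma coimIso_π {X Y : T.Algebra} (f : X ⟶ Y) :
    (Monad.forget T).map (Abelian.coimage.π f) ≫ (coimIso T f).hom =
      Abelian.coimage.π ((Monad.forget T).map f) := by
  rw [coimIso]
  simp only [Iso.trans_hom, Category.assoc]
  rw [← π_comp_cokernelComparison (kernel.ι f) (Monad.forget T)]
  rw [← PreservesCokernel.iso_inv]
  slice_lhs 2 3 => rw [Iso.inv_hom_id]
  rw [Category.id_comp, π_comp_cokernelIsoOfEq_hom_assoc]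
  simp [cokernelEpiComp]

/-- The forgetful functor commutes with the abelian image. -/
noncomputable def imIso {X Y : T.Algebra} (f : X ⟶ Y) :
    (Monad.forget T).obj (Abelian.image f) ≅ Abelian.image ((Monad.forget T).map f) :=
  PreservesKernel.iso (Monad.forget T) (cokernel.π f) ≪≫
    kernelIsoOfEq (by rw [← π_comp_cokernelComparison]) ≪≫
    kernelCompMono (cokernel.π ((Monad.forget T).map f)) (cokernelComparison f (Monad.forget T))

lemma imIso_ι {X Y : T.Algebra} (f : X ⟶ Y) :
    (imIso T f).hom ≫ Abelian.image.ι ((Monad.forget T).map f) =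
      (Monad.forget T).map (Abelian.image.ι f) := by
  rw [imIso]
  simp only [Iso.trans_hom, Category.assoc]
  rw [← kernelComparison_comp_ι (cokernel.π f) (Monad.forget T), ← PreservesKernel.iso_hom]
  congr 1
  simp [kernelCompMono, kernelIsoOfEq_hom_comp_ι]

lemma map_coimageImageComparison {X Y : T.Algebra} (f : X ⟶ Y) :
    (Monad.forget T).map (Abelian.coimageImageComparison f) =
      (coimIso T f).hom ≫ Abelian.coimageImageComparison ((Monad.forget T).map f) ≫
        (imIso T f).inv := by
  haveI : Epi ((Monad.forget T).map (Abelian.coimage.π f)) :=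
    (Monad.forget T).map_epi _
  haveI : Mono ((Monad.forget T).map (Abelian.image.ι f)) :=
    (Monad.forget T).map_mono _
  rw [← cancel_epi ((Monad.forget T).map (Abelian.coimage.π f)),
    ← cancel_mono ((Monad.forget T).map (Abelian.image.ι f))]
  have h2 : (imIso T f).inv ≫ (Monad.forget T).map (Abelian.image.ι f) =
      Abelian.image.ι ((Monad.forget T).map f) := by
    rw [← imIso_ι, Iso.inv_hom_id_assoc]
  slice_rhs 1 2 => rw [coimIso_π]
  slice_rhs 3 4 => rw [h2]
  slice_lhs 1 3 => rw [← Functor.map_comp, ← Functor.map_comp]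
  rw [Abelian.coimage_image_factorisation, Abelian.coimage_image_factorisation]

instance isIso_coimageImageComparison {X Y : T.Algebra} (f : X ⟶ Y) :
    IsIso (Abelian.coimageImageComparison f) := by
  have : IsIso ((Monad.forget T).map (Abelian.coimageImageComparison f)) := by
    rw [map_coimageImageComparison]
    infer_instance
  exact isIso_of_reflects_iso _ (Monad.forget T)

/-- The Eilenberg–Moore category of a right exact monad on an abelian category is abelian. -/
noncomputable def algebraAbelian : Abelian T.Algebra :=
  Abelian.ofCoimageImageComparisonIsIso

end MonadAbelianAux

open MonadAbelianAux

/-- Let `T` be a right exact monad on an abelian category `A`.  Then the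
Eilenberg–Moore category `Aᵀ` is abelian, free modules on projective objects are
projective, and if `A` has enough projectives then every projective object of `Aᵀ`
is a direct summand of a free module on a projective object of `A`. -/
theorem right_exact_monad_algebra_abelian_and_projectives
    {A : Type u} [Category.{v} A] [Abelian A]
    (T : Monad A) [PreservesFiniteColimits (T : A ⥤ A)] :
    Nonempty (Abelian T.Algebra) ∧
    (∀ P : A, Projective P → Projective (T.free.obj P)) ∧
    (EnoughProjectives A →
      ∀ Q : T.Algebra, Projective Q →
        ∃ (P : A) (_ : Projective P) (s : Q ⟶ T.free.obj P) (r : T.free.obj P ⟶ Q),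
          s ≫ r = 𝟙 Q) := by
  refine ⟨⟨algebraAbelian T⟩, ?_, ?_⟩
  · intro P hP
    exact T.adj.map_projective P hP
  · intro hEP Q hQ
    haveI := hEP
    haveI := hQ
    refine ⟨Projective.over Q.A, Projective.projective_over Q.A, ?_⟩
    let r : T.free.obj (Projective.over Q.A) ⟶ Q :=
      { f := (T : A ⥤ A).map (Projective.π Q.A) ≫ Q.a
        h := by
          show (T : A ⥤ A).map ((T : A ⥤ A).map (Projective.π Q.A) ≫ Q.a) ≫ Q.a =
            T.μ.app _ ≫ (T : A ⥤ A).map (Projective.π Q.A) ≫ Q.a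
          rw [Functor.map_comp, Category.assoc, ← Q.assoc, ← Category.assoc, ← Category.assoc]
          congr 1
          exact T.μ.naturality _ }
    haveI : Epi ((Monad.forget T).map r) := by
      haveI : IsSplitEpi Q.a := ⟨⟨⟨T.η.app Q.A, Q.unit⟩⟩⟩
      haveI : Epi ((T : A ⥤ A).map (Projective.π Q.A)) := (T : A ⥤ A).map_epi _
      exact epi_comp' this (SplitEpi.epi ⟨T.η.app Q.A, Q.unit⟩)
    haveI : Epi r := (Monad.forget T).epi_of_epi_map this
    exact ⟨Projective.factorThru (𝟙 Q) r, r, Projective.factorThru_comp _ _⟩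
end
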